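/- Let P = ℂ[a,b] be the polynomial ring in two variables and consider the three 3×3 matrices over P: G₁ with rows (1,0,0), (a,1,0), (b,a,1); G₂ with rows (0,1,0), (0,a,1), (1,b,a); and G₃ with rows (0,0,1), (1,0,a), (a,1,b). For each function u : {1,2,3} → {1,2,3} define the triple m_u := (∏_{c-th entry}) ∈ P³ whose c-th component (c = 1,2,3) is the product (G_c)_{u(1),1}·(G_c)_{u(2),2}·(G_c)_{u(3),3}. Then the ℂ-linear span of the 27 elements {m_u : u ∈ {1,2,3}^{3}} inside P³ has dimension exactly 10. -/
import Mathlib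

/-- The ten basis vectors of the degree-(1,1,1) component. -/
noncomputable def W (a b : MvPolynomial (Fin 2) ℂ) : Fin 10 → Fin 3 → MvPolynomial (Fin 2) ℂ :=
  ![![1, 0, 0], ![a, 0, 0], ![0, 0, 1], ![0, 0, a], ![a * a, 0, b],
    ![0, 1, 0], ![0, a, 0], ![b, a * a, 0], ![0, b, a * a], ![a * b, a * b, a * b]]

theorem W_0 (a b : MvPolynomial (Fin 2) ℂ) : W a b 0 = ![1, 0, 0] := rfl
theorem W_1 (a b : MvPolynomial (Fin 2) ℂ) : W a b 1 = ![a, 0, 0] := rfl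
theorem W_2 (a b : MvPolynomial (Fin 2) ℂ) : W a b 2 = ![0, 0, 1] := rfl
theorem W_3 (a b : MvPolynomial (Fin 2) ℂ) : W a b 3 = ![0, 0, a] := rfl
theorem W_4 (a b : MvPolynomial (Fin 2) ℂ) : W a b 4 = ![a * a, 0, b] := rfl
theorem W_5 (a b : MvPolynomial (Fin 2) ℂ) : W a b 5 = ![0, 1, 0] := rfl
theorem W_6 (a b : MvPolynomial (Fin 2) ℂ) : W a b 6 = ![0, a, 0] := rfl
theorem W_7 (a b : MvPolynomial (Fin 2) ℂ) : W a b 7 = ![b, a * a, 0] := rfl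
theorem W_8 (a b : MvPolynomial (Fin 2) ℂ) : W a b 8 = ![0, b, a * a] := rfl
theorem W_9 (a b : MvPolynomial (Fin 2) ℂ) : W a b 9 = ![a * b, a * b, a * b] := rfl

theorem my_sum_univ_ten {M : Type*} [AddCommMonoid M] (f : Fin 10 → M) :
    ∑ i, f i = f 0 + f 1 + f 2 + f 3 + f 4 + f 5 + f 6 + f 7 + f 8 + f 9 := by
  rw [Fin.sum_univ_castSucc, Fin.sum_univ_castSucc, Fin.sum_univ_eight]
  rfl

theorem degree_111_component_has_dimension_ten
    (a b : MvPolynomial (Fin 2) ℂ)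
    (ha : a = MvPolynomial.X 0) (hb : b = MvPolynomial.X 1)
    (G : Fin 3 → Matrix (Fin 3) (Fin 3) (MvPolynomial (Fin 2) ℂ))
    (hG0 : G 0 = !![1, 0, 0; a, 1, 0; b, a, 1])
    (hG1 : G 1 = !![0, 1, 0; 0, a, 1; 1, b, a])
    (hG2 : G 2 = !![0, 0, 1; 1, 0, a; a, 1, b]) :
    Module.finrank ℂ
      (Submodule.span ℂ
        (Set.range fun u : Fin 3 → Fin 3 =>
          (fun c : Fin 3 => G c (u 0) 0 * G c (u 1) 1 * G c (u 2) 2))) = 10 := by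
  have key : ∀ (x : Fin 3 → MvPolynomial (Fin 2) ℂ) (j : Fin 10), x = W a b j →
      x ∈ Submodule.span ℂ (Set.range (W a b)) :=
    fun x j h => h ▸ Submodule.subset_span ⟨j, rfl⟩
  have key0 : ∀ (x : Fin 3 → MvPolynomial (Fin 2) ℂ), x = 0 →
      x ∈ Submodule.span ℂ (Set.range (W a b)) :=
    fun x h => h ▸ (Submodule.span ℂ (Set.range (W a b))).zero_mem
  have key2 : ∀ (u : Fin 3 → Fin 3) (j : Fin 10),
      (fun c : Fin 3 => G c (u 0) 0 * G c (u 1) 1 * G c (u 2) 2) = W a b j →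
      W a b j ∈ Submodule.span ℂ
        (Set.range fun u : Fin 3 → Fin 3 =>
          (fun c : Fin 3 => G c (u 0) 0 * G c (u 1) 1 * G c (u 2) 2)) :=
    fun u j h => h ▸ Submodule.subset_span ⟨u, rfl⟩
  have hspan : Submodule.span ℂ
      (Set.range fun u : Fin 3 → Fin 3 =>
        (fun c : Fin 3 => G c (u 0) 0 * G c (u 1) 1 * G c (u 2) 2)) =
      Submodule.span ℂ (Set.range (W a b)) := by
    apply le_antisymm
    · rw [Submodule.span_le]
      rintro x ⟨u, rfl⟩
      show (fun c : Fin 3 => G c (u 0) 0 * G c (u 1) 1 * G c (u 2) 2) ∈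
        Submodule.span ℂ (Set.range (W a b))
      obtain ⟨i, hi⟩ : ∃ i, u 0 = i := ⟨_, rfl⟩
      obtain ⟨j, hj⟩ : ∃ j, u 1 = j := ⟨_, rfl⟩
      obtain ⟨k, hk⟩ : ∃ k, u 2 = k := ⟨_, rfl⟩
      rw [hi, hj, hk]
      fin_cases i <;> fin_cases j <;> fin_cases k
      · exact key0 _ (by funext c; fin_cases c <;> simp [hG0, hG1, hG2])
      · exact key0 _ (by funext c; fin_cases c <;> simp [hG0, hG1, hG2])
      · exact key0 _ (by funext c; fin_cases c <;> simp [hG0, hG1, hG2])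
      · exact key0 _ (by funext c; fin_cases c <;> simp [hG0, hG1, hG2])
      · exact key0 _ (by funext c; fin_cases c <;> simp [hG0, hG1, hG2])
      · exact key _ 0 (by funext c; fin_cases c <;> (simp [W_0, hG0, hG1, hG2]; try ring))
      · exact key0 _ (by funext c; fin_cases c <;> simp [hG0, hG1, hG2])
      · exact key0 _ (by funext c; fin_cases c <;> simp [hG0, hG1, hG2])
      · exact key _ 1 (by funext c; fin_cases c <;> (simp [W_1, hG0, hG1, hG2]; try ring))
      · exact key0 _ (by funext c; fin_cases c <;> simp [hG0, hG1, hG2])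
      · exact key0 _ (by funext c; fin_cases c <;> simp [hG0, hG1, hG2])
      · exact key0 _ (by funext c; fin_cases c <;> simp [hG0, hG1, hG2])
      · exact key0 _ (by funext c; fin_cases c <;> simp [hG0, hG1, hG2])
      · exact key0 _ (by funext c; fin_cases c <;> simp [hG0, hG1, hG2])
      · exact key _ 1 (by funext c; fin_cases c <;> (simp [W_1, hG0, hG1, hG2]; try ring))
      · exact key _ 2 (by funext c; fin_cases c <;> (simp [W_2, hG0, hG1, hG2]; try ring))
      · exact key _ 3 (by funext c; fin_cases c <;> (simp [W_3, hG0, hG1, hG2]; try ring))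
      · exact key _ 4 (by funext c; fin_cases c <;> (simp [W_4, hG0, hG1, hG2]; try ring))
      · exact key0 _ (by funext c; fin_cases c <;> simp [hG0, hG1, hG2])
      · exact key _ 5 (by funext c; fin_cases c <;> (simp [W_5, hG0, hG1, hG2]; try ring))
      · exact key _ 6 (by funext c; fin_cases c <;> (simp [W_6, hG0, hG1, hG2]; try ring))
      · exact key0 _ (by funext c; fin_cases c <;> simp [hG0, hG1, hG2])
      · exact key _ 6 (by funext c; fin_cases c <;> (simp [W_6, hG0, hG1, hG2]; try ring))
      · exact key _ 7 (by funext c; fin_cases c <;> (simp [W_7, hG0, hG1, hG2]; try ring))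
      · exact key _ 3 (by funext c; fin_cases c <;> (simp [W_3, hG0, hG1, hG2]; try ring))
      · exact key _ 8 (by funext c; fin_cases c <;> (simp [W_8, hG0, hG1, hG2]; try ring))
      · exact key _ 9 (by funext c; fin_cases c <;> (simp [W_9, hG0, hG1, hG2]; try ring))
    · rw [Submodule.span_le]
      rintro x ⟨j, rfl⟩
      fin_cases j
      · exact key2 ![0,1,2] 0 (by funext c; fin_cases c <;> (simp [W_0, hG0, hG1, hG2]; try ring))
      · exact key2 ![0,2,2] 1 (by funext c; fin_cases c <;> (simp [W_1, hG0, hG1, hG2]; try ring))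
      · exact key2 ![1,2,0] 2 (by funext c; fin_cases c <;> (simp [W_2, hG0, hG1, hG2]; try ring))
      · exact key2 ![1,2,1] 3 (by funext c; fin_cases c <;> (simp [W_3, hG0, hG1, hG2]; try ring))
      · exact key2 ![1,2,2] 4 (by funext c; fin_cases c <;> (simp [W_4, hG0, hG1, hG2]; try ring))
      · exact key2 ![2,0,1] 5 (by funext c; fin_cases c <;> (simp [W_5, hG0, hG1, hG2]; try ring))
      · exact key2 ![2,0,2] 6 (by funext c; fin_cases c <;> (simp [W_6, hG0, hG1, hG2]; try ring))
      · exact key2 ![2,1,2] 7 (by funext c; fin_cases c <;> (simp [W_7, hG0, hG1, hG2]; try ring))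
      · exact key2 ![2,2,1] 8 (by funext c; fin_cases c <;> (simp [W_8, hG0, hG1, hG2]; try ring))
      · exact key2 ![2,2,2] 9 (by funext c; fin_cases c <;> (simp [W_9, hG0, hG1, hG2]; try ring))
  have hli : LinearIndependent ℂ (W a b) := by
    rw [Fintype.linearIndependent_iff]
    intro g hg
    rw [my_sum_univ_ten] at hg
    have h0 := congrFun hg 0
    have h1 := congrFun hg 1
    have h2 := congrFun hg 2
    simp only [W_0, W_1, W_2, W_3, W_4, W_5, W_6, W_7, W_8, W_9,
      Pi.add_apply, Pi.smul_apply, Pi.zero_apply,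
      Matrix.cons_val_zero, Matrix.cons_val_one, Matrix.head_cons,
      Matrix.cons_val_two, Matrix.tail_cons,
      smul_zero, add_zero, zero_add] at h0 h1 h2
    have A1 := congrArg (MvPolynomial.aeval (R := ℂ) ![(0:ℂ), 0]) h0
    have A2 := congrArg (MvPolynomial.aeval (R := ℂ) ![(1:ℂ), 0]) h0
    have A3 := congrArg (MvPolynomial.aeval (R := ℂ) ![(-1:ℂ), 0]) h0
    have A4 := congrArg (MvPolynomial.aeval (R := ℂ) ![(0:ℂ), 1]) h0
    have A5 := congrArg (MvPolynomial.aeval (R := ℂ) ![(1:ℂ), 1]) h0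
    have B1 := congrArg (MvPolynomial.aeval (R := ℂ) ![(0:ℂ), 0]) h1
    have B2 := congrArg (MvPolynomial.aeval (R := ℂ) ![(1:ℂ), 0]) h1
    have B3 := congrArg (MvPolynomial.aeval (R := ℂ) ![(-1:ℂ), 0]) h1
    have B4 := congrArg (MvPolynomial.aeval (R := ℂ) ![(0:ℂ), 1]) h1
    have C1 := congrArg (MvPolynomial.aeval (R := ℂ) ![(0:ℂ), 0]) h2
    have C2 := congrArg (MvPolynomial.aeval (R := ℂ) ![(1:ℂ), 0]) h2
    have C3 := congrArg (MvPolynomial.aeval (R := ℂ) ![(-1:ℂ), 0]) h2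
    have C4 := congrArg (MvPolynomial.aeval (R := ℂ) ![(0:ℂ), 1]) h2
    simp [ha, hb] at A1 A2 A3 A4 A5 B1 B2 B3 B4 C1 C2 C3 C4
    intro i
    fin_cases i
    · show g 0 = 0
      linear_combination A1
    · show g 1 = 0
      linear_combination (A2 - A3) / 2
    · show g 2 = 0
      linear_combination C1
    · show g 3 = 0
      linear_combination (C2 - C3) / 2
    · show g 4 = 0
      linear_combination C4 - C1
    · show g 5 = 0
      linear_combination B1
    · show g 6 = 0
      linear_combination (B2 - B3) / 2
    · show g 7 = 0
      linear_combination A4 - A1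
    · show g 8 = 0
      linear_combination B4 - B1
    · show g 9 = 0
      linear_combination A5 - A2 - A4 + A1
  rw [hspan]
  rw [finrank_span_eq_card hli]
  simp
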